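/- Let 0 < p, q, r with p+q+r = 1 and r < min(p,q), and let w be the smallest positive root of w = 2 + pqr·w³. Then 1/max(p,q) ≤ w ≤ 1/√(pq) ≤ 1/min(p,q) < 1/r, with the first three inequalities being equalities if and only if p = q. -/

import Mathlib

theorem w_bounds_aux (p q r w : ℝ) (hp : 0 < p) (hq : 0 < q) (hr : 0 < r)
    (hsum : p + q + r = 1) (hrp : r < p) (hpq : p ≤ q)
    (hw : w = 2 + p * q * r * w ^ 3) (hwpos : 0 < w)
    (hwmin : ∀ w', 0 < w' → w' = 2 + p * q * r * w' ^ 3 → w ≤ w') :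
    (1 / q ≤ w ∧ w ≤ 1 / Real.sqrt (p * q) ∧
      1 / Real.sqrt (p * q) ≤ 1 / p ∧ 1 / p < 1 / r) ∧
    (1 / q = w ↔ p = q) ∧ (w = 1 / Real.sqrt (p * q) ↔ p = q) ∧
    (1 / Real.sqrt (p * q) = 1 / p ↔ p = q) := by
  have hrq : r < q := lt_of_lt_of_le hrp hpq
  have h3r : 3 * r < 1 := by linarith
  set s := Real.sqrt (p * q) with hs_def
  have hs : 0 < s := Real.sqrt_pos.mpr (by positivity)
  have hs2 : s ^ 2 = p * q := Real.sq_sqrt (by positivity)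
  have hps : p ≤ s := by nlinarith
  have hsq : s ≤ q := by nlinarith
  -- lower bound : 1/q ≤ w
  have hlow : 1 / q ≤ w := by
    by_contra h
    push_neg at h
    have hqw : q * w < 1 := by
      rw [lt_div_iff₀ hq] at h; linarith [mul_comm w q]
    have hqw0 : 0 < q * w := mul_pos hq hwpos
    have hpqr : 0 < p * q * r := by positivity
    have h2 : 1 + q * w + (q * w) ^ 2 < 3 := by nlinarith
    have fact1 : p * q * r * (1 + q * w + (q * w) ^ 2) < q ^ 2 := by
      nlinarith [mul_lt_mul_of_pos_left h2 hpqr,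
        mul_le_mul_of_nonneg_right hpq (show (0:ℝ) ≤ 3 * q * r by positivity),
        mul_pos (show (0:ℝ) < 1 - 3 * r by linarith) (mul_pos hq hq)]
    have fact2 : 0 < (1 - q * w) * (q ^ 2 - p * q * r * (1 + q * w + (q * w) ^ 2)) :=
      mul_pos (by linarith) (by linarith)
    have hzero : 2 + p * q * r * w ^ 3 - w = 0 := by linarith
    have e : (1 - q * w) * (q ^ 2 - p * q * r * (1 + q * w + (q * w) ^ 2))
        = q ^ 2 - p * q * r - 2 * q ^ 3 + q ^ 3 * (2 + p * q * r * w ^ 3 - w) := by ring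
    rw [hzero, mul_zero, add_zero] at e
    have hneg : p * q * r - q ^ 2 + 2 * q ^ 3 < 0 := by nlinarith [fact2]
    have hfactor : q * (q - p) * (q - r) = p * q * r - q ^ 2 + 2 * q ^ 3 := by
      linear_combination (-(q ^ 2)) * hsum
    linarith [mul_nonneg (mul_nonneg hq.le (sub_nonneg.mpr hpq)) (sub_nonneg.mpr hrq.le)]
  -- upper bound : w ≤ 1/s, via IVT on [0, 1/s]
  have hub : w ≤ 1 / s := by
    have hgs : 2 + p * q * r * (1 / s) ^ 3 - (1 / s) ≤ 0 := by
      have key : (2 + p * q * r * (1 / s) ^ 3 - 1 / s) * s ^ 3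
          = s ^ 2 * (2 * s - (p + q)) := by
        field_simp
        linear_combination (-r) * hs2 + s ^ 2 * hsum
      have h2s : 2 * s ≤ p + q := by nlinarith [sq_nonneg (p - q)]
      nlinarith [pow_pos hs 3, pow_pos hs 2]
    have hcont : ContinuousOn (fun t : ℝ => 2 + p * q * r * t ^ 3 - t) (Set.Icc 0 (1 / s)) := by
      fun_prop
    have h0s : (0 : ℝ) ≤ 1 / s := by positivity
    have hiv := intermediate_value_Icc' h0s hcont
    have hmem : (0 : ℝ) ∈ Set.Icc (2 + p * q * r * (1 / s) ^ 3 - (1 / s))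
        (2 + p * q * r * (0 : ℝ) ^ 3 - 0) := by
      constructor
      · exact hgs
      · norm_num
    obtain ⟨t, ht, hgt⟩ := hiv hmem
    simp only at hgt
    have htroot : t = 2 + p * q * r * t ^ 3 := by linarith
    have htpos : 0 < t := by
      nlinarith [ht.1, mul_nonneg (mul_nonneg (mul_nonneg hp.le hq.le) hr.le)
        (pow_nonneg ht.1 3)]
    exact le_trans (hwmin t htpos htroot) ht.2
  have h3 : 1 / s ≤ 1 / p := one_div_le_one_div_of_le hp hps
  have h4 : 1 / p < 1 / r := one_div_lt_one_div_of_lt hr hrp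
  refine ⟨⟨hlow, hub, h3, h4⟩, ?_, ?_, ?_⟩
  · constructor
    · intro h
      have hroot : 1 / q = 2 + p * q * r * (1 / q) ^ 3 := by rw [h]; exact hw
      field_simp at hroot
      have e2 : q ^ 2 = 2 * q ^ 3 + p * q * r := by
        have h2 : q ^ 2 * q = (2 * q ^ 3 + p * q * r) * q := by linear_combination q ^ 2 * hroot
        exact mul_right_cancel₀ (ne_of_gt hq) h2
      have hfactor : q * (q - p) * (q - r) = p * q * r - q ^ 2 + 2 * q ^ 3 := by
        linear_combination (-(q ^ 2)) * hsum
      have hz : q * (q - p) * (q - r) = 0 := by linarith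
      rcases mul_eq_zero.mp hz with hz1 | hz2
      · rcases mul_eq_zero.mp hz1 with hz3 | hz4
        · exact absurd hz3 (ne_of_gt hq)
        · linarith
      · linarith
    · intro h
      subst h
      have hroot : (1 : ℝ) / p = 2 + p * p * r * (1 / p) ^ 3 := by
        field_simp
        linear_combination (-1 : ℝ) * hsum
      have := hwmin (1 / p) (by positivity) hroot
      linarith
  · constructor
    · intro h
      rw [h] at hw
      field_simp at hw
      have e2 : s ^ 2 = 2 * s ^ 3 + p * q * r := by
        have h2 : s ^ 2 * s = (2 * s ^ 3 + p * q * r) * s := by linear_combination s * hw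
        exact mul_right_cancel₀ (ne_of_gt hs) h2
      have e3 : p + q = 2 * s := by
        have h2 : (p + q) * s ^ 2 = (2 * s) * s ^ 2 := by
          linear_combination s ^ 2 * hsum - r * hs2 + e2
        exact mul_right_cancel₀ (by positivity) h2
      have hpq0 : (p - q) ^ 2 = 0 := by
        linear_combination (p + q + 2 * s) * e3 + 4 * hs2
      have := sub_eq_zero.mp (pow_eq_zero_iff (two_ne_zero) |>.mp hpq0)
      linarith
    · intro h
      subst h
      have hsp : s = p := by rw [hs_def, Real.sqrt_mul_self hp.le]
      rw [hsp] at hub ⊢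
      have hroot : (1 : ℝ) / p = 2 + p * p * r * (1 / p) ^ 3 := by
        field_simp
        linear_combination (-1 : ℝ) * hsum
      have := hwmin (1 / p) (by positivity) hroot
      linarith
  · constructor
    · intro h
      have hspp : s = p := by
        field_simp at h
        linarith
      have h2 : p * p = p * q := by linear_combination hs2 - (s + p) * hspp
      exact mul_left_cancel₀ (ne_of_gt hp) h2
    · intro h
      subst h
      rw [hs_def, Real.sqrt_mul_self hp.le]

theorem w_bounds (p q r w : ℝ) (hp : 0 < p) (hq : 0 < q) (hr : 0 < r)
    (hsum : p + q + r = 1) (hmin : r < min p q)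
    (hw : w = 2 + p * q * r * w ^ 3) (hwpos : 0 < w)
    (hwmin : ∀ w', 0 < w' → w' = 2 + p * q * r * w' ^ 3 → w ≤ w') :
    (1 / max p q ≤ w ∧ w ≤ 1 / Real.sqrt (p * q) ∧
      1 / Real.sqrt (p * q) ≤ 1 / min p q ∧ 1 / min p q < 1 / r) ∧
    (1 / max p q = w ↔ p = q) ∧ (w = 1 / Real.sqrt (p * q) ↔ p = q) ∧
    (1 / Real.sqrt (p * q) = 1 / min p q ↔ p = q) := by
  have hrp : r < p := lt_of_lt_of_le hmin (min_le_left p q)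
  have hrq : r < q := lt_of_lt_of_le hmin (min_le_right p q)
  rcases le_total p q with hpq | hqp
  · rw [max_eq_right hpq, min_eq_left hpq]
    exact w_bounds_aux p q r w hp hq hr hsum hrp hpq hw hwpos hwmin
  · rw [max_eq_left hqp, min_eq_right hqp]
    have hw' : w = 2 + q * p * r * w ^ 3 := by linear_combination hw
    have hwmin' : ∀ w', 0 < w' → w' = 2 + q * p * r * w' ^ 3 → w ≤ w' := by
      intro w' h1 h2
      exact hwmin w' h1 (by linear_combination h2)
    have hsum' : q + p + r = 1 := by linarith
    have := w_bounds_aux q p r w hq hp hr hsum' hrq hqp hw' hwpos hwmin'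
    rw [mul_comm q p] at this
    refine ⟨this.1, ?_, ?_, ?_⟩
    · rw [this.2.1]; exact eq_comm
    · rw [this.2.2.1]; exact eq_comm
    · rw [this.2.2.2]; exact eq_comm
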